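/- Interval graphs are exactly the 1-thin graphs: a graph G is an interval graph if and only if there exists an ordering v_1, …, v_n of V(G) such that for every triple p < q < r with v_r v_p ∈ E(G), also v_r v_q ∈ E(G). -/

import Mathlib

variable {V : Type}

/-- `G` is an interval graph: distinct vertices are adjacent iff their closed real
intervals intersect. -/
def IsIntervalGraph (G : SimpleGraph V) : Prop :=
  ∃ l r : V → ℝ, (∀ v, l v ≤ r v) ∧
    ∀ u v, u ≠ v →
      (G.Adj u v ↔ (Set.Icc (l u) (r u) ∩ Set.Icc (l v) (r v)).Nonempty)

/-- Interval graphs are exactly the `1`-thin graphs: `G` is an interval graph iff there is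
an ordering of its vertices such that for `p < q < r`, if `v_r v_p` is an edge then so is
`v_r v_q`. -/
theorem interval_iff_oneThin [Fintype V] (G : SimpleGraph V) :
    IsIntervalGraph G ↔
      ∃ lt : V → V → Prop, IsStrictTotalOrder V lt ∧
        ∀ p q r : V, lt p q → lt q r → G.Adj r p → G.Adj r q := by
  classical
  constructor
  · rintro ⟨l, r, hlr, hadj⟩
    set e := Fintype.equivFin V with he
    refine ⟨fun u v => r u < r v ∨ (r u = r v ∧ e u < e v), ?_, ?_⟩
    · have h1 : IsTrichotomous V (fun u v => r u < r v ∨ (r u = r v ∧ e u < e v)) := by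
        suffices hs : ∀ a b, (r a < r b ∨ (r a = r b ∧ e a < e b)) ∨ a = b ∨
            (r b < r a ∨ (r b = r a ∧ e b < e a)) by
          exact ⟨fun a b h1' h2' => ((hs a b).resolve_left h1').resolve_right h2'⟩
        intro a b
        rcases lt_trichotomy (r a) (r b) with h | h | h
        · exact Or.inl (Or.inl h)
        · rcases lt_trichotomy (e a) (e b) with h' | h' | h'
          · exact Or.inl (Or.inr ⟨h, h'⟩)
          · exact Or.inr (Or.inl (e.injective h'))
          · exact Or.inr (Or.inr (Or.inr ⟨h.symm, h'⟩))
        · exact Or.inr (Or.inr (Or.inl h))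
      have h2 : IsIrrefl V (fun u v => r u < r v ∨ (r u = r v ∧ e u < e v)) := by
        constructor
        intro a h
        rcases h with h | ⟨_, h⟩ <;> exact lt_irrefl _ h
      have h3 : IsTrans V (fun u v => r u < r v ∨ (r u = r v ∧ e u < e v)) := by
        constructor
        rintro a b c (h | ⟨h1, h2⟩) (h' | ⟨h1', h2'⟩)
        · exact Or.inl (h.trans h')
        · exact Or.inl (h1' ▸ h)
        · exact Or.inl (h1 ▸ h')
        · exact Or.inr ⟨h1.trans h1', h2.trans h2'⟩
      exact { toTrichotomous := h1, toIsStrictOrder := { toIrrefl := h2, toIsTrans := h3 } }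
    · rintro p q s hpq hqs hsp
      have hrpq : r p ≤ r q := by
        rcases hpq with h | ⟨h, _⟩; exact h.le; exact h.le
      have hrqs : r q ≤ r s := by
        rcases hqs with h | ⟨h, _⟩; exact h.le; exact h.le
      have hqs' : q ≠ s := by
        rintro rfl
        rcases hqs with h | ⟨_, h⟩ <;> exact lt_irrefl _ h
      obtain ⟨x, ⟨hx1, hx2⟩, ⟨hx3, hx4⟩⟩ := (hadj s p hsp.ne).mp hsp
      refine ((hadj s q hqs'.symm).mpr ⟨r q, ⟨?_, hrqs⟩, ⟨hlr q, le_refl _⟩⟩)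
      exact hx1.trans (hx4.trans hrpq)
  · rintro ⟨lt, hSTO, hthin⟩
    have htri := @trichotomous _ lt hSTO.toTrichotomous
    have hirr := hSTO.irrefl
    have htrans := hSTO.trans
    -- rank function
    set ρ : V → ℝ := fun v => ((Finset.univ.filter (fun u => lt u v)).card : ℝ) with hρ
    have hmono : ∀ {a b}, lt a b → ρ a < ρ b := by
      intro a b hab
      have hss : (Finset.univ.filter (fun u => lt u a)) ⊂ (Finset.univ.filter (fun u => lt u b)) := by
        constructor
        · intro x hx
          simp only [Finset.mem_filter, Finset.mem_univ, true_and] at hx ⊢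
          exact htrans _ _ _ hx hab
        · intro h
          have ha : a ∈ Finset.univ.filter (fun u => lt u b) := by
            simp [hab]
          have := h ha
          simp only [Finset.mem_filter, Finset.mem_univ, true_and] at this
          exact hirr a this
      have := Finset.card_lt_card hss
      simp only [hρ]
      exact_mod_cast this
    set S : V → Finset V := fun v => insert v (Finset.univ.filter (fun u => lt u v ∧ G.Adj u v))
      with hS
    have hSne : ∀ v, ((S v).image ρ).Nonempty :=
      fun v => ⟨ρ v, Finset.mem_image_of_mem ρ (Finset.mem_insert_self _ _)⟩
    set l : V → ℝ := fun v => ((S v).image ρ).min' (hSne v) with hl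
    have hlle : ∀ v, l v ≤ ρ v :=
      fun v => Finset.min'_le _ _ (Finset.mem_image_of_mem ρ (Finset.mem_insert_self _ _))
    -- key equivalence for lt u v
    have key : ∀ u v, lt u v → (G.Adj u v ↔ l v ≤ ρ u) := by
      intro u v huv
      constructor
      · intro hadj
        refine Finset.min'_le _ _ (Finset.mem_image_of_mem ρ ?_)
        exact Finset.mem_insert_of_mem (by simp [huv, hadj])
      · intro hle
        obtain ⟨w, hw, hwρ⟩ := Finset.mem_image.mp (((S v).image ρ).min'_mem (hSne v))
        have hle' : ρ w ≤ ρ u := le_trans (le_of_eq hwρ) hle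
        clear hle
        rename' hle' => hle
        rcases Finset.mem_insert.mp hw with rfl | hw'
        · exact absurd (lt_of_le_of_lt hle (hmono huv)) (lt_irrefl _)
        · simp only [Finset.mem_filter, Finset.mem_univ, true_and] at hw'
          obtain ⟨hwv, hwadj⟩ := hw'
          rcases htri w u with h | rfl | h
          · exact (hthin w u v h huv hwadj.symm).symm
          · exact hwadj
          · exact absurd (lt_of_le_of_lt hle (hmono h)) (lt_irrefl _)
    refine ⟨l, ρ, hlle, fun u v huv => ?_⟩
    rcases htri u v with h | rfl | h
    · rw [key u v h]
      constructor
      · intro hle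
        exact ⟨ρ u, ⟨hlle u, le_refl _⟩, ⟨hle, (hmono h).le⟩⟩
      · rintro ⟨x, ⟨_, hx2⟩, ⟨hx3, _⟩⟩
        exact hx3.trans hx2
    · exact absurd rfl huv
    · rw [G.adj_comm, key v u h, Set.inter_comm]
      constructor
      · intro hle
        exact ⟨ρ v, ⟨hlle v, le_refl _⟩, ⟨hle, (hmono h).le⟩⟩
      · rintro ⟨x, ⟨_, hx2⟩, ⟨hx3, _⟩⟩
        exact hx3.trans hx2
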